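/- Let (X, ‖·‖, ⪯) be a reflexive partially ordered Banach space in which all order intervals [a,→) = {x ∈ X : a ⪯ x} and (←,b] = {x ∈ X : x ⪯ b} are convex and closed. Then every bounded monotone increasing sequence {x_n} in X converges weakly to some x ∈ X, and moreover x_n ⪯ x for every n. -/

import Mathlib

open Filter NormedSpace Metric

section Helpers

variable {X : Type*} [NormedAddCommGroup X] [NormedSpace ℝ X]

private lemma weak_isClosed' {s : Set X} (hconv : Convex ℝ s) (hcl : IsClosed s) :
    IsClosed (toWeakSpace ℝ X '' s) := by
  rw [← closure_eq_iff_isClosed, ← hconv.toWeakSpace_closure ℝ, hcl.closure_eq]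

private lemma clusterPt_mem' {s : Set X} (hconv : Convex ℝ s) (hcl : IsClosed s)
    {F : Filter (WeakSpace ℝ X)} {p : WeakSpace ℝ X}
    (hF : (toWeakSpace ℝ X '' s) ∈ F) (hp : ClusterPt p F) :
    (toWeakSpace ℝ X).symm p ∈ s := by
  have h1 : p ∈ closure (toWeakSpace ℝ X '' s) :=
    mem_closure_iff_clusterPt.2 (hp.mono (le_principal_iff.2 hF))
  rw [(weak_isClosed' hconv hcl).closure_eq] at h1
  obtain ⟨z, hz, rfl⟩ := h1
  simpa using hz

private lemma weak_compact_ball'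
    (hrefl : Function.Surjective (NormedSpace.inclusionInDoubleDual ℝ X)) (r : ℝ) :
    IsCompact (toWeakSpace ℝ X '' closedBall (0 : X) r) := by
  set J := NormedSpace.inclusionInDoubleDual ℝ X
  have hinj : Function.Injective J := (inclusionInDoubleDualLi ℝ (E := X)).injective
  let Jeq : X ≃ₗ[ℝ] StrongDual ℝ (StrongDual ℝ X) :=
    LinearEquiv.ofBijective (J : X →ₗ[ℝ] StrongDual ℝ (StrongDual ℝ X)) ⟨hinj, hrefl⟩
  let ψ : WeakDual ℝ (StrongDual ℝ X) → WeakSpace ℝ X :=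
    fun y => toWeakSpace ℝ X (Jeq.symm y)
  have hJeq : ∀ y : StrongDual ℝ (StrongDual ℝ X), J (Jeq.symm y) = y := fun y =>
    Jeq.apply_symm_apply y
  have hψcont : Continuous ψ := by
    apply WeakBilin.continuous_of_continuous_eval
    intro f
    have : (fun y : WeakDual ℝ (StrongDual ℝ X) =>
        (topDualPairing ℝ X).flip (ψ y) f) = fun y : WeakDual ℝ (StrongDual ℝ X) => y f := by
      funext y
      have := congrArg (fun g => g f) (hJeq y)
      simp only [ψ, J, NormedSpace.dual_def] at this ⊢
      exact this
    rw [this]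
    exact WeakDual.eval_continuous f
  have hK : IsCompact (WeakDual.toStrongDual ⁻¹' closedBall (0 : StrongDual ℝ (StrongDual ℝ X)) r :
      Set (WeakDual ℝ (StrongDual ℝ X))) := WeakDual.isCompact_closedBall (𝕜 := ℝ) (0 : StrongDual ℝ (StrongDual ℝ X)) r
  have himg : ψ '' (WeakDual.toStrongDual ⁻¹' closedBall (0 : StrongDual ℝ (StrongDual ℝ X)) r) =
      toWeakSpace ℝ X '' closedBall (0 : X) r := by
    ext z
    constructor
    · rintro ⟨y, hy, rfl⟩
      refine ⟨Jeq.symm y, ?_, rfl⟩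
      have hy' : ‖WeakDual.toStrongDual y‖ ≤ r := by
        exact (dist_zero_right (WeakDual.toStrongDual y)).symm.trans_le hy
      have : ‖J (Jeq.symm y)‖ ≤ r := by rw [hJeq y]; exact hy'
      have hnorm : ‖J (Jeq.symm y)‖ = ‖Jeq.symm y‖ :=
        (inclusionInDoubleDualLi ℝ (E := X)).norm_map _
      simpa [mem_closedBall, dist_eq_norm, hnorm] using this
    · rintro ⟨w, hw, rfl⟩
      refine ⟨J w, ?_, ?_⟩
      · have hnorm : ‖J w‖ = ‖w‖ := (inclusionInDoubleDualLi ℝ (E := X)).norm_map _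
        show J w ∈ closedBall (0 : StrongDual ℝ (StrongDual ℝ X)) r
        exact (dist_zero_right (J w)).trans_le (hnorm.trans_le (mem_closedBall_zero_iff.1 hw))
      · simp only [ψ]
        congr 1
        exact Jeq.symm_apply_apply w
  exact himg ▸ hK.image hψcont

end Helpers

/-- A sequence converges weakly to `p` iff `f (x n) → f p` for every continuous
linear functional `f`. -/
def WeaklyConvergesTo {X : Type*} [NormedAddCommGroup X] [NormedSpace ℝ X]
    (x : ℕ → X) (p : X) : Prop :=
  ∀ f : X →L[ℝ] ℝ, Tendsto (fun n => f (x n)) atTop (nhds (f p))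

/-- A Banach space is reflexive if the canonical embedding into its bidual is
surjective. -/
def IsReflexiveSpace (X : Type*) [NormedAddCommGroup X] [NormedSpace ℝ X] : Prop :=
  Function.Surjective (NormedSpace.inclusionInDoubleDual ℝ X)

/-- In a reflexive partially ordered Banach space whose order intervals are convex and
closed, every bounded monotone increasing sequence converges weakly to some `x`,
and `x_n ≤ x` for every `n`. -/
theorem bounded_monotone_weak_convergence
    {X : Type*} [NormedAddCommGroup X] [NormedSpace ℝ X] [CompleteSpace X]
    [PartialOrder X]
    (hrefl : IsReflexiveSpace X)
    (hIccUp : ∀ a : X, Convex ℝ {x : X | a ≤ x} ∧ IsClosed {x : X | a ≤ x})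
    (hIccDown : ∀ b : X, Convex ℝ {x : X | x ≤ b} ∧ IsClosed {x : X | x ≤ b})
    (x : ℕ → X) (hbd : Bornology.IsBounded (Set.range x))
    (hmono : ∀ n, x n ≤ x (n + 1)) :
    ∃ p : X, WeaklyConvergesTo x p ∧ ∀ n, x n ≤ p := by
  have hmono' : Monotone x := monotone_nat_of_le_succ hmono
  obtain ⟨r, hr⟩ := hbd.subset_closedBall (0 : X)
  set y : ℕ → WeakSpace ℝ X := fun n => toWeakSpace ℝ X (x n) with hy
  set B : Set (WeakSpace ℝ X) := toWeakSpace ℝ X '' closedBall (0 : X) r with hB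
  have hBcomp : IsCompact B := weak_compact_ball' hrefl r
  have hymem : ∀ n, y n ∈ B := fun n => ⟨x n, hr ⟨n, rfl⟩, rfl⟩
  set F : Filter (WeakSpace ℝ X) := map y atTop with hF
  have hFB : B ∈ F := mem_map.2 (Eventually.of_forall hymem)
  -- any cluster point of F is an upper bound of the sequence
  have hub : ∀ q : WeakSpace ℝ X, ClusterPt q F → ∀ n, x n ≤ (toWeakSpace ℝ X).symm q := by
    intro q hq n
    refine clusterPt_mem' (hIccUp (x n)).1 (hIccUp (x n)).2 ?_ hq
    rw [hF, mem_map]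
    filter_upwards [eventually_ge_atTop n] with m hm
    exact ⟨x m, hmono' hm, rfl⟩
  -- pick a cluster point
  obtain ⟨p', hp'B, hp'⟩ := hBcomp.exists_clusterPt (le_principal_iff.2 hFB)
  set p : X := (toWeakSpace ℝ X).symm p' with hp
  have hubp : ∀ n, x n ≤ p := hub p' hp'
  -- cluster points are unique
  have huniq : ∀ q' ∈ B, ClusterPt q' F → q' = p' := by
    intro q' _ hq'
    set q : X := (toWeakSpace ℝ X).symm q' with hqdef
    have hubq : ∀ n, x n ≤ q := hub q' hq'
    have hqp : q ≤ p := by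
      refine clusterPt_mem' (hIccDown p).1 (hIccDown p).2 ?_ hq'
      rw [hF, mem_map]
      exact Eventually.of_forall fun m => ⟨x m, hubp m, rfl⟩
    have hpq : p ≤ q := by
      refine clusterPt_mem' (hIccDown q).1 (hIccDown q).2 ?_ hp'
      rw [hF, mem_map]
      exact Eventually.of_forall fun m => ⟨x m, hubq m, rfl⟩
    have : q = p := le_antisymm hqp hpq
    calc q' = toWeakSpace ℝ X q := ((toWeakSpace ℝ X).apply_symm_apply q').symm
    _ = toWeakSpace ℝ X p := by rw [this]
    _ = p' := (toWeakSpace ℝ X).apply_symm_apply p'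
  have htends : Tendsto y atTop (nhds p') :=
    hBcomp.le_nhds_of_unique_clusterPt hFB huniq
  refine ⟨p, ?_, hubp⟩
  intro f
  have hfc : Continuous fun z : WeakSpace ℝ X => f ((toWeakSpace ℝ X).symm z) :=
    WeakBilin.eval_continuous ((topDualPairing ℝ X).flip) f
  have := (hfc.tendsto p').comp htends
  simpa [hy, hp, Function.comp_def] using this
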